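/- Let P : ℝ^d → ℝ be twice continuously differentiable with ‖y ⋅ ∇²P(z) y‖ ≤ c'' ‖y‖² for all z in a convex set containing x₀ and x. Suppose x − x₀ = (1/t)(r − x₀) for some vector r and t ≥ 1, P is convex with P(0) = 0. Then t·P(x) − (t−1)·P(x₀) ≤ ∇P(x₀) · r + (c''/(2t)) ‖r − x₀‖². -/

import Mathlib

/-- key potential inequality along a regret update x = ((t−1)/t)x₀ + (1/t)r. -/
theorem stmt_4 {d : ℕ} (P : (Fin d → ℝ) → ℝ)
    (hP : ContDiff ℝ 2 P) (hconv : ConvexOn ℝ Set.univ P) (h0 : P 0 = 0)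
    (c'' : ℝ) (x₀ x r : Fin d → ℝ) (t : ℝ) (ht : 1 ≤ t)
    (hhess : ∀ z ∈ segment ℝ x₀ x, ∀ y : Fin d → ℝ,
      |fderiv ℝ (fderiv ℝ P) z y y| ≤ c'' * ‖y‖ ^ 2)
    (hupd : x - x₀ = (1 / t) • (r - x₀)) :
    t * P x - (t - 1) * P x₀ ≤ fderiv ℝ P x₀ r + c'' / (2 * t) * ‖r - x₀‖ ^ 2 := by
  have ht0 : (0:ℝ) < t := lt_of_lt_of_le one_pos ht
  set v : Fin d → ℝ := x - x₀ with hv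
  have hPdiff : Differentiable ℝ P := hP.differentiable (by norm_num)
  have hP' : ContDiff ℝ 1 (fderiv ℝ P) := hP.fderiv_right (by norm_num)
  have hP'diff : Differentiable ℝ (fderiv ℝ P) := hP'.differentiable (by norm_num)
  set γ : ℝ → (Fin d → ℝ) := fun s => x₀ + s • v with hγdef
  have hγ : ∀ s : ℝ, HasDerivAt γ v s := by
    intro s
    simpa [hγdef] using ((hasDerivAt_id s).smul_const v).const_add x₀
  have hseg : ∀ s ∈ Set.Icc (0:ℝ) 1, γ s ∈ segment ℝ x₀ x := by
    intro s hs
    exact ⟨1 - s, s, by linarith [hs.2], hs.1, by ring, by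
      simp only [hγdef, hv]; module⟩
  set g : ℝ → ℝ := fun s => P (γ s) with hgdef
  set g1 : ℝ → ℝ := fun s => fderiv ℝ P (γ s) v with hg1def
  have hg : ∀ s : ℝ, HasDerivAt g (g1 s) s := fun s =>
    (hPdiff (γ s)).hasFDerivAt.comp_hasDerivAt s (hγ s)
  have hg1 : ∀ s : ℝ, HasDerivAt g1 (fderiv ℝ (fderiv ℝ P) (γ s) v v) s := by
    intro s
    have h1 : HasDerivAt (fun u => fderiv ℝ P (γ u)) (fderiv ℝ (fderiv ℝ P) (γ s) v) s :=
      (hP'diff (γ s)).hasFDerivAt.comp_hasDerivAt s (hγ s)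
    simpa using h1.clm_apply (hasDerivAt_const s v)
  have hC : ∀ s ∈ Set.Icc (0:ℝ) 1, ‖fderiv ℝ (fderiv ℝ P) (γ s) v v‖ ≤ c'' * ‖v‖ ^ 2 := by
    intro s hs
    simpa [Real.norm_eq_abs] using hhess (γ s) (hseg s hs) v
  -- Lipschitz bound on g1
  have hlip : ∀ s ∈ Set.Icc (0:ℝ) 1, g1 s - g1 0 ≤ c'' * ‖v‖ ^ 2 * s := by
    intro s hs
    have := Convex.norm_image_sub_le_of_norm_hasDerivWithin_le
      (f := g1) (f' := fun u => fderiv ℝ (fderiv ℝ P) (γ u) v v) (C := c'' * ‖v‖ ^ 2)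
      (fun u hu => (hg1 u).hasDerivWithinAt) hC (convex_Icc 0 1)
      (Set.mem_Icc.mpr ⟨le_refl 0, zero_le_one⟩) hs
    have h2 : |g1 s - g1 0| ≤ c'' * ‖v‖ ^ 2 * s := by
      simpa [Real.norm_eq_abs, abs_of_nonneg hs.1] using this
    linarith [le_abs_self (g1 s - g1 0)]
  -- the auxiliary function φ
  set φ : ℝ → ℝ := fun s => g s - g1 0 * s - c'' * ‖v‖ ^ 2 * s ^ 2 / 2 with hφdef
  have hφ' : ∀ s : ℝ, HasDerivAt φ (g1 s - g1 0 - c'' * ‖v‖ ^ 2 * s) s := by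
    intro s
    have h1 : HasDerivAt (fun s : ℝ => g1 0 * s) (g1 0) s := by
      simpa using (hasDerivAt_id s).const_mul (g1 0)
    have h2 : HasDerivAt (fun s : ℝ => c'' * ‖v‖ ^ 2 * s ^ 2 / 2)
        (c'' * ‖v‖ ^ 2 * s) s := by
      have := ((hasDerivAt_pow 2 s).const_mul (c'' * ‖v‖ ^ 2)).div_const 2
      exact this.congr_deriv (by simp only [Nat.cast_ofNat, show (2:ℕ) - 1 = 1 from rfl, pow_one]; ring)
    exact ((hg s).sub h1).sub h2
  have hanti : AntitoneOn φ (Set.Icc 0 1) := by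
    apply antitoneOn_of_deriv_nonpos (convex_Icc 0 1)
    · exact Continuous.continuousOn (by
        have : Continuous φ := by
          have := fun s => (hφ' s).differentiableAt
          exact Differentiable.continuous (fun s => (hφ' s).differentiableAt)
        exact this)
    · intro s hs
      exact (hφ' s).differentiableAt.differentiableWithinAt
    · intro s hs
      rw [interior_Icc] at hs
      rw [(hφ' s).deriv]
      have := hlip s ⟨le_of_lt hs.1, le_of_lt hs.2⟩
      linarith
  have hφ10 : φ 1 ≤ φ 0 := hanti (Set.mem_Icc.mpr ⟨le_refl 0, zero_le_one⟩)
      (Set.mem_Icc.mpr ⟨zero_le_one, le_refl 1⟩) zero_le_one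
  have hγ0 : γ 0 = x₀ := by simp [hγdef]
  have hγ1 : γ 1 = x := by simp [hγdef, hv]
  have hkey : P x ≤ P x₀ + fderiv ℝ P x₀ v + c'' * ‖v‖ ^ 2 / 2 := by
    have e0 : φ 0 = P x₀ := by simp [hφdef, hgdef, hγ0]
    have e1 : φ 1 = P x - fderiv ℝ P x₀ v - c'' * ‖v‖ ^ 2 / 2 := by
      simp [hφdef, hgdef, hg1def, hγ0, hγ1]
    rw [e0, e1] at hφ10
    linarith
  -- gradient inequality: P x₀ ≤ fderiv P x₀ x₀
  have hgrad : P x₀ ≤ fderiv ℝ P x₀ x₀ := by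
    set h : ℝ → ℝ := fun s => P (s • x₀) with hhdef
    have hhconv : ConvexOn ℝ Set.univ h := by
      have h2 := hconv.comp_affineMap (AffineMap.lineMap (0 : Fin d → ℝ) x₀)
      have heq : (P ∘ ⇑(AffineMap.lineMap (0 : Fin d → ℝ) x₀)) = h := by
        ext s
        simp [hhdef, AffineMap.lineMap_apply]
      rw [heq] at h2
      simpa using h2
    have hh' : HasDerivAt h (fderiv ℝ P x₀ x₀) 1 := by
      have h1 : HasDerivAt (fun s : ℝ => s • x₀) x₀ 1 := by
        simpa using (hasDerivAt_id (1:ℝ)).smul_const x₀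
      have := (hPdiff ((1:ℝ) • x₀)).hasFDerivAt.comp_hasDerivAt 1 h1
      rw [one_smul] at this
      exact this
    have := hhconv.slope_le_of_hasDerivAt (Set.mem_univ 0) (Set.mem_univ 1) one_pos hh'
    simpa [slope_def_field, hhdef, h0] using this
  -- now assemble
  have hDv : fderiv ℝ P x₀ v = (1 / t) * (fderiv ℝ P x₀ r - fderiv ℝ P x₀ x₀) := by
    rw [hupd, (fderiv ℝ P x₀).map_smul]
    simp [smul_eq_mul]
  have hnv : ‖v‖ ^ 2 = (1 / t) ^ 2 * ‖r - x₀‖ ^ 2 := by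
    rw [hupd, norm_smul]
    rw [Real.norm_eq_abs, abs_of_pos (by positivity : (0:ℝ) < 1 / t)]
    ring
  rw [hDv, hnv] at hkey
  have hmul := mul_le_mul_of_nonneg_left hkey (le_of_lt ht0)
  have e1 : t * (P x₀ + 1 / t * (fderiv ℝ P x₀ r - fderiv ℝ P x₀ x₀)
        + c'' * ((1 / t) ^ 2 * ‖r - x₀‖ ^ 2) / 2)
      = t * P x₀ + (fderiv ℝ P x₀ r - fderiv ℝ P x₀ x₀)
        + c'' / (2 * t) * ‖r - x₀‖ ^ 2 := by
    field_simp
  rw [e1] at hmul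
  linarith
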